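/- For every edge set E' of a graph, the fractional matching number ν*(E') is either an integer or a half-integer (i.e., 2·ν*(E') ∈ ℤ). -/

import Mathlib

open Finset

set_option linter.unusedSectionVars false

def FracMatching {V : Type*} [Fintype V] [DecidableEq V]
    (E : Finset (Finset V)) (f : Finset V → ℝ) : Prop :=
  (∀ e, 0 ≤ f e) ∧ (∀ e, e ∉ E → f e = 0) ∧
  ∀ v : V, ∑ e ∈ E, (if v ∈ e then f e else 0) ≤ 1

namespace HalfInt

variable {W : Type*} [Fintype W] [DecidableEq W]

/-- vertex sum of f at w -/
def vsum (E : Finset (Finset W)) (f : Finset W → ℝ) (w : W) : ℝ :=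
  ∑ e ∈ E, if w ∈ e then f e else 0

open Classical in
/-- the set of edges with non-integral value -/
noncomputable def Bad (E : Finset (Finset W)) (f : Finset W → ℝ) : Finset (Finset W) :=
  E.filter (fun e => ¬ ∃ z : ℤ, f e = (z:ℝ))

lemma mem_Bad {E : Finset (Finset W)} {f : Finset W → ℝ} {e : Finset W} :
    e ∈ Bad E f ↔ e ∈ E ∧ ¬ ∃ z : ℤ, f e = (z:ℝ) := by
  classical
  simp [Bad]

lemma Bad_subset (E : Finset (Finset W)) (f : Finset W → ℝ) : Bad E f ⊆ E :=
  fun e he => (mem_Bad.mp he).1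

lemma sum_int {s : Finset (Finset W)} {h : Finset W → ℝ}
    (H : ∀ e ∈ s, ∃ z : ℤ, h e = (z : ℝ)) : ∃ z : ℤ, ∑ e ∈ s, h e = (z : ℝ) := by
  classical
  induction s using Finset.induction with
  | empty => exact ⟨0, by simp⟩
  | @insert a s ha ih =>
    obtain ⟨z1, hz1⟩ := H a (by simp)
    obtain ⟨z2, hz2⟩ := ih (fun e he => H e (by simp [he]))
    exact ⟨z1 + z2, by rw [Finset.sum_insert ha, hz1, hz2]; push_cast; ring⟩

lemma edge_le_one {E : Finset (Finset W)} {f : Finset W → ℝ}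
    (hf : FracMatching E f) {e : Finset W} (he : e ∈ E) (hne : e.Nonempty) : f e ≤ 1 := by
  obtain ⟨w, hw⟩ := hne
  calc f e = (if w ∈ e then f e else 0) := by simp [hw]
    _ ≤ ∑ e' ∈ E, (if w ∈ e' then f e' else 0) :=
        Finset.single_le_sum (f := fun e' => if w ∈ e' then f e' else 0)
          (fun e' _ => by split_ifs; exacts [hf.1 e', le_refl 0]) he
    _ ≤ 1 := hf.2.2 w

lemma bad_mem_Ioo {E : Finset (Finset W)} {f : Finset W → ℝ} (hf : FracMatching E f)
    (hE2 : ∀ e ∈ E, e.card = 2) {e : Finset W} (he : e ∈ Bad E f) :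
    0 < f e ∧ f e < 1 := by
  rw [mem_Bad] at he
  have h0 : 0 ≤ f e := hf.1 e
  have h1 : f e ≤ 1 := edge_le_one hf he.1 (Finset.card_pos.mp (by rw [hE2 e he.1]; norm_num))
  constructor
  · rcases lt_or_eq_of_le h0 with h | h
    · exact h
    · exact absurd ⟨0, by simp [← h]⟩ he.2
  · rcases lt_or_eq_of_le h1 with h | h
    · exact h
    · exact absurd ⟨1, by simp [h]⟩ he.2


variable {W : Type*} [Fintype W] [DecidableEq W]

/-- alternating perturbation along edges `c 0, ..., c (m-1)` -/
def pert (c : ℕ → Finset W) (m : ℕ) : Finset W → ℝ :=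
  fun e => ∑ i ∈ range m, if e = c i then (-1:ℝ)^i else 0

lemma pert_supp {c : ℕ → Finset W} {m : ℕ} {e : Finset W} (h : pert c m e ≠ 0) :
    ∃ i < m, e = c i := by
  by_contra hc
  push_neg at hc
  apply h
  unfold pert
  apply Finset.sum_eq_zero
  intro i hi
  rw [if_neg (hc i (mem_range.mp hi))]

lemma pert_eq {c : ℕ → Finset W} {m : ℕ}
    (hinj : ∀ i < m, ∀ j < m, c i = c j → i = j) {i : ℕ} (hi : i < m) :
    pert c m (c i) = (-1:ℝ)^i := by
  unfold pert
  rw [Finset.sum_eq_single_of_mem i (mem_range.mpr hi)]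
  · rw [if_pos rfl]
  · intro j hj hne
    rw [if_neg (fun h => hne (hinj j (mem_range.mp hj) i hi h.symm))]

lemma pert_abs_le {c : ℕ → Finset W} {m : ℕ} (e : Finset W) : |pert c m e| ≤ m := by
  unfold pert
  calc |∑ i ∈ range m, if e = c i then (-1:ℝ)^i else 0|
      ≤ ∑ i ∈ range m, |if e = c i then (-1:ℝ)^i else 0| := Finset.abs_sum_le_sum_abs _ _
    _ ≤ ∑ i ∈ range m, 1 := by
        apply Finset.sum_le_sum
        intro i _
        split_ifs
        · rw [abs_pow, abs_neg, abs_one, one_pow]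
        · norm_num
    _ = m := by simp

lemma sum_pert {E : Finset (Finset W)} {c : ℕ → Finset W} {m : ℕ}
    (hcE : ∀ i < m, c i ∈ E) :
    ∑ e ∈ E, pert c m e = ∑ i ∈ range m, (-1:ℝ)^i := by
  unfold pert
  rw [Finset.sum_comm]
  apply Finset.sum_congr rfl
  intro i hi
  rw [Finset.sum_ite_eq' E (c i) (fun _ => (-1:ℝ)^i), if_pos (hcE i (mem_range.mp hi))]

lemma vsum_pert {E : Finset (Finset W)} {c : ℕ → Finset W} {m : ℕ}
    (hcE : ∀ i < m, c i ∈ E) (w : W) :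
    vsum E (pert c m) w = ∑ i ∈ range m, if w ∈ c i then (-1:ℝ)^i else 0 := by
  unfold vsum
  have h1 : ∀ e ∈ E, (if w ∈ e then pert c m e else 0)
      = ∑ i ∈ range m, if e = c i then (if w ∈ c i then (-1:ℝ)^i else 0) else 0 := by
    intro e _
    by_cases hwe : w ∈ e
    · rw [if_pos hwe]
      unfold pert
      apply Finset.sum_congr rfl
      intro i _
      by_cases hec : e = c i
      · subst hec
        rw [if_pos rfl, if_pos rfl, if_pos hwe]
      · rw [if_neg hec, if_neg hec]
    · rw [if_neg hwe]
      symm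
      apply Finset.sum_eq_zero
      intro i _
      by_cases hec : e = c i
      · subst hec
        rw [if_pos rfl, if_neg hwe]
      · rw [if_neg hec]
  rw [Finset.sum_congr rfl h1, Finset.sum_comm]
  apply Finset.sum_congr rfl
  intro i hi
  rw [Finset.sum_ite_eq' E (c i) _, if_pos (hcE i (mem_range.mp hi))]

lemma vsum_add_smul (E : Finset (Finset W)) (f p : Finset W → ℝ) (ε : ℝ) (w : W) :
    vsum E (fun e => f e + ε * p e) w = vsum E f w + ε * vsum E p w := by
  unfold vsum
  rw [Finset.mul_sum, ← Finset.sum_add_distrib]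
  apply Finset.sum_congr rfl
  intro e _
  by_cases hwe : w ∈ e
  · simp [hwe]
  · simp [hwe]

variable {W : Type*} [Fintype W] [DecidableEq W]
variable {E : Finset (Finset W)} {f : Finset W → ℝ}

/-- If there is an alternating edge sequence with positive total sign whose vertex
imbalances only occur at slack vertices, then `f` is not optimal. -/
lemma improve (hE2 : ∀ e ∈ E, e.card = 2) (hf : FracMatching E f)
    {m : ℕ} {c : ℕ → Finset W}
    (hcB : ∀ i < m, c i ∈ Bad E f)
    (hvert : ∀ w, (∑ i ∈ range m, if w ∈ c i then (-1:ℝ)^i else 0) ≤ 0 ∨ vsum E f w < 1)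
    (hpos : 0 < ∑ i ∈ range m, (-1:ℝ)^i) :
    ∃ g, FracMatching E g ∧ ∑ e ∈ E, f e < ∑ e ∈ E, g e := by
  classical
  have hcE : ∀ i < m, c i ∈ E := fun i hi => Bad_subset E f (hcB i hi)
  have hm : 0 < m := by
    rcases Nat.eq_zero_or_pos m with h | h
    · subst h; simp at hpos
    · exact h
  have hmR : (0:ℝ) < m := by exact_mod_cast hm
  set S : W → ℝ := fun w => ∑ i ∈ range m, if w ∈ c i then (-1:ℝ)^i else 0 with hS
  set A : Finset ℝ := ((range m).image fun i => f (c i)/m) ∪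
    ((univ.filter fun w => vsum E f w < 1).image fun w => (1 - vsum E f w)/m) with hA
  have hAne : A.Nonempty := ⟨f (c 0)/m, by
    apply Finset.mem_union_left
    exact Finset.mem_image_of_mem _ (mem_range.mpr hm)⟩
  set ε := A.min' hAne with hε
  have hεle : ∀ a ∈ A, ε ≤ a := fun a ha => Finset.min'_le A a ha
  have hεpos : 0 < ε := by
    rw [hε, Finset.lt_min'_iff]
    intro a ha
    rw [hA, Finset.mem_union] at ha
    rcases ha with ha | ha
    · obtain ⟨i, hi, rfl⟩ := Finset.mem_image.mp ha
      exact div_pos (bad_mem_Ioo hf hE2 (hcB i (mem_range.mp hi))).1 hmR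
    · obtain ⟨w, hw, rfl⟩ := Finset.mem_image.mp ha
      have := (Finset.mem_filter.mp hw).2
      have : 0 < 1 - vsum E f w := by linarith
      exact div_pos this hmR
  have hSle : ∀ w, S w ≤ m := by
    intro w
    rw [hS]
    calc (∑ i ∈ range m, if w ∈ c i then (-1:ℝ)^i else 0)
        ≤ ∑ i ∈ range m, 1 := by
          apply Finset.sum_le_sum
          intro i _
          split_ifs
          · rcases Even.neg_one_pow (α := ℝ) (n := i) with h
            rcases Nat.even_or_odd i with he | ho
            · rw [he.neg_one_pow]
            · rw [ho.neg_one_pow]; norm_num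
          · norm_num
      _ = m := by simp
  refine ⟨fun e => f e + ε * pert c m e, ⟨?_, ?_, ?_⟩, ?_⟩
  · -- nonneg
    intro e
    show 0 ≤ f e + ε * pert c m e
    by_cases hp : pert c m e = 0
    · rw [hp]; simpa using hf.1 e
    · obtain ⟨i, hi, rfl⟩ := pert_supp hp
      have hio := bad_mem_Ioo hf hE2 (hcB i hi)
      have h1 : ε * m ≤ f (c i) := by
        have := hεle (f (c i)/m) (Finset.mem_union_left _
          (Finset.mem_image_of_mem _ (mem_range.mpr hi)))
        rw [le_div_iff₀ hmR] at this
        exact this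
      have h2 : |ε * pert c m (c i)| ≤ f (c i) := by
        rw [abs_mul, abs_of_pos hεpos]
        calc ε * |pert c m (c i)| ≤ ε * m :=
              mul_le_mul_of_nonneg_left (pert_abs_le _) hεpos.le
          _ ≤ f (c i) := h1
      have := abs_le.mp h2
      linarith [this.1]
  · -- zero off E
    intro e he
    show f e + ε * pert c m e = 0
    by_cases hp : pert c m e = 0
    · rw [hp, hf.2.1 e he]; ring
    · obtain ⟨i, hi, rfl⟩ := pert_supp hp
      exact absurd (hcE i hi) he
  · -- vertex constraints
    intro w
    have key : vsum E (fun e => f e + ε * pert c m e) w ≤ 1 := by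
      rw [vsum_add_smul, vsum_pert hcE]
      have hfw : vsum E f w ≤ 1 := hf.2.2 w
      rcases hvert w with h | h
      · have : ε * (∑ i ∈ range m, if w ∈ c i then (-1:ℝ)^i else 0) ≤ 0 :=
          mul_nonpos_of_nonneg_of_nonpos hεpos.le h
        linarith
      · have hwA : ε ≤ (1 - vsum E f w)/m := hεle _ (Finset.mem_union_right _
          (Finset.mem_image_of_mem _ (Finset.mem_filter.mpr ⟨Finset.mem_univ w, h⟩)))
        rw [le_div_iff₀ hmR] at hwA
        have h2 : ε * (∑ i ∈ range m, if w ∈ c i then (-1:ℝ)^i else 0) ≤ ε * m :=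
          mul_le_mul_of_nonneg_left (hSle w) hεpos.le
        linarith
    exact key
  · -- value increases
    show ∑ e ∈ E, f e < ∑ e ∈ E, (f e + ε * pert c m e)
    rw [Finset.sum_add_distrib, ← Finset.mul_sum, sum_pert hcE]
    nlinarith [mul_pos hεpos hpos]


/-- If there is an alternating edge sequence with zero total sign whose vertex
imbalances only occur at "leaf" vertices with slack, then there is another optimal
solution with strictly fewer non-integral edges. -/
lemma rotate (hE2 : ∀ e ∈ E, e.card = 2) (hf : FracMatching E f)
    {m : ℕ} {c : ℕ → Finset W} (hm : 0 < m)
    (hcB : ∀ i < m, c i ∈ Bad E f)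
    (hinj : ∀ i < m, ∀ j < m, c i = c j → i = j)
    (hvert : ∀ w, (∑ i ∈ range m, if w ∈ c i then (-1:ℝ)^i else 0) ≤ 0 ∨
      ((∑ i ∈ range m, if w ∈ c i then (-1:ℝ)^i else 0) = 1 ∧ vsum E f w < 1 ∧
        ∃ i0, i0 < m ∧ w ∈ c i0 ∧ Even i0 ∧ (∀ i < m, w ∈ c i → i = i0) ∧
          ∀ e ∈ E, w ∈ e → e ≠ c i0 → ∃ z : ℤ, f e = (z:ℝ)))
    (hzero : ∑ i ∈ range m, (-1:ℝ)^i = 0) :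
    ∃ g, FracMatching E g ∧ ∑ e ∈ E, g e = ∑ e ∈ E, f e ∧ Bad E g ⊂ Bad E f := by
  classical
  have hcE : ∀ i < m, c i ∈ E := fun i hi => Bad_subset E f (hcB i hi)
  set S : W → ℝ := fun w => ∑ i ∈ range m, if w ∈ c i then (-1:ℝ)^i else 0 with hS
  set A : Finset ℝ := ((range m).image fun i => if Even i then 1 - f (c i) else f (c i)) ∪
    ((univ.filter fun w => (0:ℝ) < S w).image fun w => 1 - vsum E f w) with hA
  have hAne : A.Nonempty := ⟨if Even 0 then 1 - f (c 0) else f (c 0), by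
    apply Finset.mem_union_left
    exact Finset.mem_image_of_mem _ (mem_range.mpr hm)⟩
  set ε := A.min' hAne with hε
  have hεle : ∀ a ∈ A, ε ≤ a := fun a ha => Finset.min'_le A a ha
  have hεpos : 0 < ε := by
    rw [hε, Finset.lt_min'_iff]
    intro a ha
    rw [hA, Finset.mem_union] at ha
    rcases ha with ha | ha
    · obtain ⟨i, hi, rfl⟩ := Finset.mem_image.mp ha
      have hio := bad_mem_Ioo hf hE2 (hcB i (mem_range.mp hi))
      split_ifs
      · linarith [hio.2]
      · exact hio.1
    · obtain ⟨w, hw, rfl⟩ := Finset.mem_image.mp ha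
      have hSw := (Finset.mem_filter.mp hw).2
      rcases hvert w with h | h
      · exfalso; have hh : S w ≤ 0 := h; linarith
      · linarith [h.2.1]
  set g : Finset W → ℝ := fun e => f e + ε * pert c m e with hg
  have hgval : ∀ i < m, g (c i) = f (c i) + ε * (-1:ℝ)^i := by
    intro i hi
    rw [hg]
    dsimp only
    rw [pert_eq hinj hi]
  have hgoff : ∀ e, (∀ i < m, e ≠ c i) → g e = f e := by
    intro e he
    have hp : pert c m e = 0 := by
      by_contra hp
      obtain ⟨i, hi, rfl⟩ := pert_supp hp
      exact he i hi rfl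
    rw [hg]; dsimp only; rw [hp]; ring
  have hfeas : FracMatching E g := by
    refine ⟨?_, ?_, ?_⟩
    · intro e
      by_cases hp : ∀ i < m, e ≠ c i
      · rw [hgoff e hp]; exact hf.1 e
      · push_neg at hp
        obtain ⟨i, hi, rfl⟩ := hp
        rw [hgval i hi]
        have hio := bad_mem_Ioo hf hE2 (hcB i hi)
        rcases Nat.even_or_odd i with hev | hod
        · rw [hev.neg_one_pow]; nlinarith
        · rw [hod.neg_one_pow]
          have : ε ≤ f (c i) := by
            have := hεle (if Even i then 1 - f (c i) else f (c i))
              (Finset.mem_union_left _ (Finset.mem_image_of_mem _ (mem_range.mpr hi)))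
            rwa [if_neg (Nat.not_even_iff_odd.mpr hod)] at this
          linarith
    · intro e he
      have hp : ∀ i < m, e ≠ c i := by
        intro i hi hei
        exact he (hei ▸ hcE i hi)
      rw [hgoff e hp]
      exact hf.2.1 e he
    · intro w
      have key : vsum E g w ≤ 1 := by
        rw [hg, vsum_add_smul, vsum_pert hcE]
        have hfw : vsum E f w ≤ 1 := hf.2.2 w
        rcases hvert w with h | h
        · nlinarith [mul_nonpos_of_nonneg_of_nonpos hεpos.le h]
        · have hεw : ε ≤ 1 - vsum E f w := by
            apply hεle
            apply Finset.mem_union_right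
            apply Finset.mem_image_of_mem
            refine Finset.mem_filter.mpr ⟨Finset.mem_univ w, ?_⟩
            rw [hS]; dsimp only; rw [h.1]; norm_num
          rw [h.1]
          linarith
      exact key
  have hval : ∑ e ∈ E, g e = ∑ e ∈ E, f e := by
    rw [hg]
    show ∑ e ∈ E, (f e + ε * pert c m e) = ∑ e ∈ E, f e
    rw [Finset.sum_add_distrib, ← Finset.mul_sum, sum_pert hcE, hzero]
    ring
  refine ⟨g, hfeas, hval, ?_⟩
  have hsub : Bad E g ⊆ Bad E f := by
    intro e he
    rw [mem_Bad] at he ⊢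
    refine ⟨he.1, ?_⟩
    by_cases hp : ∀ i < m, e ≠ c i
    · rw [← hgoff e hp]; exact he.2
    · push_neg at hp
      obtain ⟨i, hi, rfl⟩ := hp
      exact (mem_Bad.mp (hcB i hi)).2
  rw [Finset.ssubset_iff_of_subset hsub]
  -- find an edge that became integral
  have hεA : ε ∈ A := A.min'_mem hAne
  rw [hA, Finset.mem_union] at hεA
  rcases hεA with hε1 | hε2
  · obtain ⟨i, hi, heq⟩ := Finset.mem_image.mp hε1
    have hi' := mem_range.mp hi
    refine ⟨c i, hcB i hi', ?_⟩
    rw [mem_Bad]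
    push_neg
    intro _
    rcases Nat.even_or_odd i with hev | hod
    · refine ⟨1, ?_⟩
      rw [hgval i hi', hev.neg_one_pow, ← heq, if_pos hev]
      push_cast; ring
    · refine ⟨0, ?_⟩
      rw [hgval i hi', hod.neg_one_pow, ← heq, if_neg (Nat.not_even_iff_odd.mpr hod)]
      push_cast; ring
  · obtain ⟨w, hwfil, heq⟩ := Finset.mem_image.mp hε2
    have hSw := (Finset.mem_filter.mp hwfil).2
    rcases hvert w with h | h
    · exfalso; have hh : S w ≤ 0 := h; linarith
    · obtain ⟨hS1, hslack, i0, hi0, hwi0, heven, huniq, hgood⟩ := h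
      refine ⟨c i0, hcB i0 hi0, ?_⟩
      rw [mem_Bad]
      push_neg
      intro _
      -- the vertex w is tight for g, and all other edges at w are integral
      have htight : vsum E g w = 1 := by
        rw [hg, vsum_add_smul, vsum_pert hcE, hS1, ← heq]
        ring
      have hsplit : vsum E g w = g (c i0) + ∑ e ∈ E.erase (c i0), (if w ∈ e then g e else 0) := by
        rw [vsum, ← Finset.add_sum_erase E _ (hcE i0 hi0), if_pos hwi0]
      have hrest : ∃ z : ℤ, ∑ e ∈ E.erase (c i0), (if w ∈ e then g e else 0) = (z:ℝ) := by
        apply sum_int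
        intro e he
        rw [Finset.mem_erase] at he
        by_cases hwe : w ∈ e
        · rw [if_pos hwe]
          have hne : ∀ i < m, e ≠ c i := by
            intro i hi hei
            exact he.1 (by rw [hei, huniq i hi (hei ▸ hwe)])
          rw [hgoff e hne]
          exact hgood e he.2 hwe he.1
        · exact ⟨0, by rw [if_neg hwe]; norm_num⟩
      obtain ⟨z, hz⟩ := hrest
      refine ⟨1 - z, ?_⟩
      have := htight
      rw [hsplit, hz] at this
      push_cast
      linarith


lemma sum_ite_zero {m : ℕ} {P : ℕ → Prop} [DecidablePred P]
    (hP : ∀ i < m, ¬ P i) (val : ℕ → ℝ) :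
    ∑ i ∈ range m, (if P i then val i else 0) = 0 := by
  apply Finset.sum_eq_zero
  intro i hi
  rw [if_neg (hP i (mem_range.mp hi))]

lemma sum_ite_single {m a : ℕ} (ha : a < m) {P : ℕ → Prop} [DecidablePred P]
    (hP : ∀ i < m, (P i ↔ i = a)) (val : ℕ → ℝ) :
    ∑ i ∈ range m, (if P i then val i else 0) = val a := by
  rw [Finset.sum_eq_single_of_mem a (mem_range.mpr ha)]
  · rw [if_pos ((hP a ha).mpr rfl)]
  · intro j hj hne
    rw [if_neg (fun h => hne ((hP j (mem_range.mp hj)).mp h))]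

lemma sum_ite_pair {m a b : ℕ} (ha : a < m) (hb : b < m) (hab : a ≠ b)
    {P : ℕ → Prop} [DecidablePred P] (hP : ∀ i < m, (P i ↔ (i = a ∨ i = b)))
    (val : ℕ → ℝ) :
    ∑ i ∈ range m, (if P i then val i else 0) = val a + val b := by
  classical
  have h1 : ∀ i ∈ range m, (if P i then val i else 0)
      = (if i = a then val a else 0) + (if i = b then val b else 0) := by
    intro i hi
    rcases (em (P i)) with h | h
    · rcases (hP i (mem_range.mp hi)).mp h with rfl | rfl
      · rw [if_pos h, if_pos rfl, if_neg hab]; ring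
      · rw [if_pos h, if_pos rfl, if_neg (Ne.symm hab)]; ring
    · rw [if_neg h, if_neg, if_neg]
      · ring
      · intro hib; exact h ((hP i (mem_range.mp hi)).mpr (Or.inr hib))
      · intro hia; exact h ((hP i (mem_range.mp hi)).mpr (Or.inl hia))
  rw [Finset.sum_congr rfl h1, Finset.sum_add_distrib,
    Finset.sum_ite_eq' (range m) a (fun _ => val a),
    Finset.sum_ite_eq' (range m) b (fun _ => val b),
    if_pos (mem_range.mpr ha), if_pos (mem_range.mpr hb)]

lemma leaf_slack (hf : FracMatching E f) {w : W} {e0 : Finset W}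
    (he0 : e0 ∈ Bad E f) (hw : w ∈ e0)
    (hleaf : ∀ e ∈ E, w ∈ e → e ≠ e0 → ∃ z : ℤ, f e = (z:ℝ)) :
    vsum E f w < 1 := by
  classical
  have hle : vsum E f w ≤ 1 := hf.2.2 w
  rcases lt_or_eq_of_le hle with h | h
  · exact h
  exfalso
  have he0E : e0 ∈ E := Bad_subset E f he0
  have hsplit : vsum E f w = f e0 + ∑ e ∈ E.erase e0, (if w ∈ e then f e else 0) := by
    rw [vsum, ← Finset.add_sum_erase E _ he0E, if_pos hw]
  have hrest : ∃ z : ℤ, ∑ e ∈ E.erase e0, (if w ∈ e then f e else 0) = (z:ℝ) := by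
    apply sum_int
    intro e he
    rw [Finset.mem_erase] at he
    by_cases hwe : w ∈ e
    · rw [if_pos hwe]; exact hleaf e he.2 hwe he.1
    · exact ⟨0, by rw [if_neg hwe]; norm_num⟩
  obtain ⟨z, hz⟩ := hrest
  apply (mem_Bad.mp he0).2
  refine ⟨1 - z, ?_⟩
  rw [hsplit, hz] at h
  push_cast
  linarith


/-- a simple path in the edge set `B`, given by vertices `v 0, ..., v k` -/
def PathProp (B : Finset (Finset W)) (k : ℕ) (v : ℕ → W) : Prop :=
  (∀ i ≤ k, ∀ j ≤ k, v i = v j → i = j) ∧ (∀ i < k, ({v i, v (i+1)} : Finset W) ∈ B)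

lemma path_parity {E : Finset (Finset W)} (side : W → Bool)
    (hside : ∀ e ∈ E, ∀ a ∈ e, ∀ b ∈ e, a ≠ b → side a ≠ side b)
    {B : Finset (Finset W)} (hBE : B ⊆ E) {k : ℕ} {v : ℕ → W} (hp : PathProp B k v) :
    ∀ i ≤ k, side (v i) = if Even i then side (v 0) else !side (v 0) := by
  intro i
  induction i with
  | zero => intro _; simp
  | succ n ih =>
    intro hn
    have hnk : n ≤ k := le_trans (Nat.le_succ n) hn
    have hedge : ({v n, v (n+1)} : Finset W) ∈ E := hBE (hp.2 n (by omega))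
    have hne : v n ≠ v (n+1) := fun h => by have := hp.1 n hnk (n+1) hn h; omega
    have hss := hside _ hedge (v n) (by simp) (v (n+1)) (by simp) hne
    have h2 : side (v (n+1)) = !side (v n) := by
      cases hsn : side (v n) <;> cases hsn1 : side (v (n+1)) <;> simp_all
    rw [h2, ih hnk]
    by_cases h : Even n
    · simp [h, Nat.even_add_one]
    · simp [h, Nat.even_add_one]

lemma neg_one_pow_pred_add {s : ℕ} (hs : 1 ≤ s) : (-1:ℝ)^(s-1) + (-1:ℝ)^s = 0 := by
  obtain ⟨n, rfl⟩ := Nat.exists_eq_add_of_le hs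
  have h1 : 1 + n - 1 = n := by omega
  rw [h1, add_comm 1 n, pow_succ]
  ring

lemma cycle_case (hE2 : ∀ e ∈ E, e.card = 2) (side : W → Bool)
    (hside : ∀ e ∈ E, ∀ a ∈ e, ∀ b ∈ e, a ≠ b → side a ≠ side b)
    (hf : FracMatching E f)
    {k : ℕ} {v : ℕ → W} (hp : PathProp (Bad E f) k v)
    {t : ℕ} (ht2 : 2 ≤ t) (htk : t ≤ k) (hct : ({v 0, v t} : Finset W) ∈ Bad E f) :
    ∃ g, FracMatching E g ∧ ∑ e ∈ E, g e = ∑ e ∈ E, f e ∧ Bad E g ⊂ Bad E f := by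
  classical
  obtain ⟨hinjv, hedge⟩ := hp
  have htodd : ¬ Even t := by
    intro hev
    have h1 := path_parity side hside (Bad_subset E f) ⟨hinjv, hedge⟩ t htk
    rw [if_pos hev] at h1
    have hne : v 0 ≠ v t := fun h => by have := hinjv 0 (by omega) t htk h; omega
    exact hside _ (Bad_subset E f hct) (v 0) (by simp) (v t) (by simp) hne (by rw [h1])
  set c : ℕ → Finset W := fun i => if i = t then ({v t, v 0} : Finset W) else {v i, v (i+1)}
    with hc
  have hcB : ∀ i < t+1, c i ∈ Bad E f := by
    intro i hi
    rw [hc]; dsimp only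
    split_ifs with h
    · rw [Finset.pair_comm]; exact hct
    · exact hedge i (by omega)
  have hvmem : ∀ i < t+1, ∀ w, (w ∈ c i ↔ w = v i ∨ w = v (if i = t then 0 else i+1)) := by
    intro i hi w
    rw [hc]; dsimp only
    split_ifs with h
    · subst h; simp
    · simp
  have hvidx : ∀ i < t+1, ∀ s ≤ k, (v s ∈ c i ↔ s = i ∨ s = (if i = t then 0 else i+1)) := by
    intro i hi s hs
    rw [hvmem i hi]
    have hile : i ≤ k := by omega
    have hnle : (if i = t then 0 else i+1) ≤ k := by split_ifs <;> omega
    constructor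
    · rintro (h | h)
      · exact Or.inl (hinjv s hs i hile h)
      · exact Or.inr (hinjv s hs _ hnle h)
    · rintro (rfl | rfl)
      · exact Or.inl rfl
      · exact Or.inr rfl
  have hinj : ∀ i < t+1, ∀ j < t+1, c i = c j → i = j := by
    intro i hi j hj hcij
    have d1 : i = j ∨ i = (if j = t then 0 else j+1) := by
      have := (hvidx j hj i (by omega)).mp (by rw [← hcij, hvmem i hi]; exact Or.inl rfl)
      tauto
    have d2 : (if i = t then 0 else i+1) = j ∨
        (if i = t then 0 else i+1) = (if j = t then 0 else j+1) := by
      have hnle : (if i = t then 0 else i+1) ≤ k := by split_ifs <;> omega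
      have := (hvidx j hj _ hnle).mp (by rw [← hcij, hvmem i hi]; exact Or.inr rfl)
      tauto
    by_cases hit : i = t <;> by_cases hjt : j = t <;>
      simp [hit, hjt] at d1 d2 <;> omega
  have hS : ∀ w, (∑ i ∈ range (t+1), if w ∈ c i then (-1:ℝ)^i else 0) = 0 := by
    intro w
    by_cases hw : ∃ s ≤ t, w = v s
    · obtain ⟨s, hst, rfl⟩ := hw
      by_cases hs0 : s = 0
      · subst hs0
        rw [sum_ite_pair (a := 0) (b := t) (by omega) (by omega) (by omega)
          (fun i hi => by
            rw [hvidx i hi 0 (by omega)]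
            by_cases h : i = t
            · simp [h]
            · simp only [if_neg h]; omega)]
        rw [pow_zero, Odd.neg_one_pow (Nat.odd_iff.mpr (Nat.not_even_iff.mp htodd))]
        ring
      · rw [sum_ite_pair (a := s-1) (b := s) (by omega) (by omega) (by omega)
          (fun i hi => by
            rw [hvidx i hi s (by omega)]
            by_cases h : i = t
            · simp only [if_pos h]; omega
            · simp only [if_neg h]; omega)]
        exact neg_one_pow_pred_add (by omega)
    · rw [sum_ite_zero]
      intro i hi hwc
      rcases (hvmem i hi w).mp hwc with h | h
      · exact hw ⟨i, by omega, h⟩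
      · refine hw ⟨(if i = t then 0 else i+1), by split_ifs <;> omega, h⟩
  have hzero : ∑ i ∈ range (t+1), (-1:ℝ)^i = 0 := by
    rw [neg_one_geom_sum, if_pos (Nat.even_add_one.mpr htodd)]
  obtain ⟨g, hg1, hg2, hg3⟩ := rotate hE2 hf (by omega) hcB hinj
    (fun w => Or.inl (le_of_eq (hS w))) hzero
  exact ⟨g, hg1, hg2, hg3⟩


lemma path_case (hE2 : ∀ e ∈ E, e.card = 2) (hf : FracMatching E f)
    {k : ℕ} {v : ℕ → W} (hp : PathProp (Bad E f) k v) (hk : 1 ≤ k)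
    (hleaf0 : ∀ e ∈ Bad E f, v 0 ∈ e → e = ({v 0, v 1} : Finset W))
    (hleafk : ∀ e ∈ Bad E f, v k ∈ e → e = ({v (k-1), v k} : Finset W)) :
    (∃ g, FracMatching E g ∧ ∑ e ∈ E, g e = ∑ e ∈ E, f e ∧ Bad E g ⊂ Bad E f) ∨
    (∃ g, FracMatching E g ∧ ∑ e ∈ E, f e < ∑ e ∈ E, g e) := by
  classical
  obtain ⟨hinjv, hedge⟩ := hp
  set c : ℕ → Finset W := fun i => ({v i, v (i+1)} : Finset W) with hc
  have hcB : ∀ i < k, c i ∈ Bad E f := fun i hi => hedge i hi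
  have hvmem : ∀ i < k, ∀ w, (w ∈ c i ↔ w = v i ∨ w = v (i+1)) := by
    intro i hi w
    rw [hc]; simp
  have hvidx : ∀ i < k, ∀ s ≤ k, (v s ∈ c i ↔ s = i ∨ s = i+1) := by
    intro i hi s hs
    rw [hvmem i hi]
    constructor
    · rintro (h | h)
      · exact Or.inl (hinjv s hs i (by omega) h)
      · exact Or.inr (hinjv s hs (i+1) (by omega) h)
    · rintro (rfl | rfl)
      · exact Or.inl rfl
      · exact Or.inr rfl
  have hinj : ∀ i < k, ∀ j < k, c i = c j → i = j := by
    intro i hi j hj hcij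
    have d1 : i = j ∨ i = j+1 := by
      exact (hvidx j hj i (by omega)).mp (by rw [← hcij, hvmem i hi]; exact Or.inl rfl)
    have d2 : i+1 = j ∨ i+1 = j+1 := by
      exact (hvidx j hj (i+1) (by omega)).mp (by rw [← hcij, hvmem i hi]; exact Or.inr rfl)
    omega
  -- leaf slack at both endpoints
  have hgood0 : ∀ e ∈ E, v 0 ∈ e → e ≠ c 0 → ∃ z : ℤ, f e = (z:ℝ) := by
    intro e he hve hne
    by_cases hb : e ∈ Bad E f
    · exact absurd (hleaf0 e hb hve) hne
    · rw [mem_Bad] at hb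
      push_neg at hb
      exact hb he
  have hgoodk : ∀ e ∈ E, v k ∈ e → e ≠ c (k-1) → ∃ z : ℤ, f e = (z:ℝ) := by
    intro e he hve hne
    by_cases hb : e ∈ Bad E f
    · refine absurd (hleafk e hb hve) ?_
      have : c (k-1) = ({v (k-1), v k} : Finset W) := by
        rw [hc]; dsimp only
        rw [Nat.sub_add_cancel hk]
      rw [← this]
      exact hne
    · rw [mem_Bad] at hb
      push_neg at hb
      exact hb he
  have hs0 : vsum E f (v 0) < 1 :=
    leaf_slack hf (hcB 0 (by omega)) (by rw [hvmem 0 (by omega)]; exact Or.inl rfl) hgood0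
  have hsk : vsum E f (v k) < 1 := by
    refine leaf_slack hf (hcB (k-1) (by omega)) ?_ hgoodk
    rw [hvmem (k-1) (by omega)]
    right
    congr 1
    omega
  -- vertex sum computations
  have hSout : ∀ w, (¬ ∃ s ≤ k, w = v s) →
      (∑ i ∈ range k, if w ∈ c i then (-1:ℝ)^i else 0) = 0 := by
    intro w hw
    rw [sum_ite_zero]
    intro i hi hwc
    rcases (hvmem i hi w).mp hwc with h | h
    · exact hw ⟨i, by omega, h⟩
    · exact hw ⟨i+1, by omega, h⟩
  have hS0 : (∑ i ∈ range k, if v 0 ∈ c i then (-1:ℝ)^i else 0) = 1 := by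
    rw [sum_ite_single (a := 0) (by omega)
      (fun i hi => by rw [hvidx i hi 0 (by omega)]; omega)]
    exact pow_zero _
  have hSk : (∑ i ∈ range k, if v k ∈ c i then (-1:ℝ)^i else 0) = (-1:ℝ)^(k-1) := by
    rw [sum_ite_single (a := k-1) (by omega)
      (fun i hi => by rw [hvidx i hi k (by omega)]; omega)]
  have hSmid : ∀ s, 1 ≤ s → s ≤ k - 1 →
      (∑ i ∈ range k, if v s ∈ c i then (-1:ℝ)^i else 0) = 0 := by
    intro s hs1 hs2
    rw [sum_ite_pair (a := s-1) (b := s) (by omega) (by omega) (by omega)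
      (fun i hi => by rw [hvidx i hi s (by omega)]; omega)]
    exact neg_one_pow_pred_add hs1
  rcases Nat.even_or_odd k with hkev | hkod
  · -- even path: rotate
    left
    have hkk : 2 ≤ k := by
      rcases Nat.even_iff.mp hkev with h
      omega
    apply rotate hE2 hf (by omega : 0 < k) hcB hinj
    · intro w
      by_cases hw : ∃ s ≤ k, w = v s
      · obtain ⟨s, hsk', rfl⟩ := hw
        by_cases hs0' : s = 0
        · subst hs0'
          right
          refine ⟨hS0, hs0, 0, by omega, ?_, Even.zero, ?_, hgood0⟩
          · rw [hvmem 0 (by omega)]; exact Or.inl rfl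
          · intro i hi hvi
            have := (hvidx i hi 0 (by omega)).mp hvi
            omega
        · by_cases hsk'' : s = k
          · subst hsk''
            left
            rw [hSk, Odd.neg_one_pow (Nat.Even.sub_odd hk hkev odd_one)]
            norm_num
          · left
            rw [hSmid s (by omega) (by omega)]
      · left
        rw [hSout _ hw]
    · rw [neg_one_geom_sum, if_pos hkev]
  · -- odd path: improve
    right
    apply improve hE2 hf hcB
    · intro w
      by_cases hw : ∃ s ≤ k, w = v s
      · obtain ⟨s, hsk', rfl⟩ := hw
        by_cases hs0' : s = 0
        · subst hs0'; exact Or.inr hs0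
        · by_cases hsk'' : s = k
          · subst hsk''; exact Or.inr hsk
          · left
            rw [hSmid s (by omega) (by omega)]
      · left
        rw [hSout _ hw]
    · rw [neg_one_geom_sum, if_neg (Nat.not_even_iff_odd.mpr hkod)]
      norm_num


lemma leaf_of_maximal {B : Finset (Finset W)} {E : Finset (Finset W)} (hBE : B ⊆ E)
    (hE2 : ∀ e ∈ E, e.card = 2)
    {k : ℕ} {v : ℕ → W} (hp : PathProp B k v) (hk : 1 ≤ k)
    (hmax : ∀ k', (∃ v' : ℕ → W, PathProp B k' v') → k' ≤ k)
    (hnc : ¬ ∃ t, 2 ≤ t ∧ t ≤ k ∧ ({v 0, v t} : Finset W) ∈ B) :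
    ∀ e ∈ B, v 0 ∈ e → e = ({v 0, v 1} : Finset W) := by
  classical
  obtain ⟨hinjv, hedge⟩ := hp
  have key : ∀ u : W, u ≠ v 0 → ({v 0, u} : Finset W) ∈ B → u = v 1 := by
    intro u hu hB
    by_cases hus : ∃ s ≤ k, u = v s
    · obtain ⟨s, hsk, rfl⟩ := hus
      have hs0 : s ≠ 0 := fun h => hu (by rw [h])
      by_cases hs1 : s = 1
      · rw [hs1]
      · exact absurd ⟨s, by omega, hsk, hB⟩ hnc
    · exfalso
      -- extend the path at the front
      have hext : PathProp B (k+1) (fun i => if i = 0 then u else v (i-1)) := by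
        constructor
        · intro i hi j hj hij
          dsimp only at hij
          split_ifs at hij with h1 h2 h2
          · omega
          · exact absurd ⟨j - 1, by omega, hij⟩ hus
          · exact absurd ⟨i - 1, by omega, hij.symm⟩ hus
          · have := hinjv (i-1) (by omega) (j-1) (by omega) hij
            omega
        · intro i hi
          dsimp only
          by_cases h0 : i = 0
          · subst h0
            simp only [if_pos rfl, if_neg (by omega : ¬ (0:ℕ)+1 = 0)]
            rw [Finset.pair_comm]
            simpa using hB
          · simp only [if_neg h0, if_neg (by omega : ¬ i+1 = 0)]
            have h1 : i + 1 - 1 = (i-1) + 1 := by omega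
            rw [h1]
            exact hedge (i-1) (by omega)
      have := hmax (k+1) ⟨_, hext⟩
      omega
  intro e heB hv0e
  obtain ⟨a, b, hab, rfl⟩ := Finset.card_eq_two.mp (hE2 e (hBE heB))
  rcases Finset.mem_insert.mp hv0e with h | h
  · -- v 0 = a
    subst h
    have hb := key b (fun hb => hab (by rw [hb])) heB
    rw [hb]
  · -- v 0 = b
    rw [Finset.mem_singleton] at h
    subst h
    rw [Finset.pair_comm] at heB ⊢
    have ha := key a (fun ha => hab (by rw [ha])) heB
    rw [ha]

theorem bipartite_integral (E : Finset (Finset W)) (hE2 : ∀ e ∈ E, e.card = 2)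
    (side : W → Bool)
    (hside : ∀ e ∈ E, ∀ a ∈ e, ∀ b ∈ e, a ≠ b → side a ≠ side b)
    (μ : ℝ) (hμ : IsGreatest {x : ℝ | ∃ f, FracMatching E f ∧ ∑ e ∈ E, f e = x} μ) :
    ∃ z : ℤ, μ = (z:ℝ) := by
  classical
  obtain ⟨⟨f0, hf0, hv0⟩, hub⟩ := hμ
  have hTne : {n | ∃ f, FracMatching E f ∧ ∑ e ∈ E, f e = μ ∧ (Bad E f).card = n}.Nonempty :=
    ⟨(Bad E f0).card, f0, hf0, hv0, rfl⟩
  obtain ⟨f, hf, hval, hcard⟩ := Nat.sInf_mem hTne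
  have hmin : ∀ g, FracMatching E g → ∑ e ∈ E, g e = μ →
      (Bad E f).card ≤ (Bad E g).card := by
    intro g hg hgv
    rw [hcard]
    exact Nat.sInf_le ⟨g, hg, hgv, rfl⟩
  clear hcard hTne hf0 hv0
  have hBadempty : Bad E f = ∅ := by
    by_contra hBne
    obtain ⟨e0, he0⟩ := Finset.nonempty_iff_ne_empty.mpr hBne
    -- the set of path lengths
    have hK1 : 1 ∈ {k | ∃ v : ℕ → W, PathProp (Bad E f) k v} := by
      obtain ⟨a, b, hab, he0ab⟩ := Finset.card_eq_two.mp (hE2 e0 (Bad_subset E f he0))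
      refine ⟨fun i => if i = 0 then a else b, ?_, ?_⟩
      · intro i hi j hj hij
        interval_cases i <;> interval_cases j <;> simp_all
      · intro i hi
        have h0 : i = 0 := by omega
        subst h0
        simp only [if_pos rfl, if_neg (by omega : ¬ (0:ℕ)+1 = 0)]
        exact he0ab ▸ he0
    have hKbdd : BddAbove {k | ∃ v : ℕ → W, PathProp (Bad E f) k v} := by
      refine ⟨Fintype.card W, ?_⟩
      rintro k ⟨v, hv⟩
      have hinj : Set.InjOn v (range (k+1)) := by
        intro a ha b hb hab
        exact hv.1 a (by simpa using Nat.lt_succ_iff.mp (mem_range.mp (by simpa using ha)))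
          b (by simpa using Nat.lt_succ_iff.mp (mem_range.mp (by simpa using hb))) hab
      have := Finset.card_le_card_of_injOn v (fun a _ => Finset.mem_univ (v a)) hinj
      simp only [Finset.card_range, Finset.card_univ] at this
      omega
    obtain ⟨k, hkv, hmax, hk1⟩ : ∃ k, (∃ v : ℕ → W, PathProp (Bad E f) k v) ∧
        (∀ k', (∃ v' : ℕ → W, PathProp (Bad E f) k' v') → k' ≤ k) ∧ 1 ≤ k :=
      ⟨sSup {k | ∃ v : ℕ → W, PathProp (Bad E f) k v}, Nat.sSup_mem ⟨1, hK1⟩ hKbdd,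
        fun k' h => le_csSup hKbdd h, le_csSup hKbdd hK1⟩
    obtain ⟨v, hv⟩ := hkv
    -- contradiction helpers
    have contr1 : ∀ g, FracMatching E g → ∑ e ∈ E, g e = ∑ e ∈ E, f e →
        Bad E g ⊂ Bad E f → False := by
      intro g hg hgv hsub
      have h1 := hmin g hg (hgv.trans hval)
      have h2 := Finset.card_lt_card hsub
      omega
    have contr2 : ∀ g, FracMatching E g → ∑ e ∈ E, f e < ∑ e ∈ E, g e → False := by
      intro g hg hgt
      have h1 : ∑ e ∈ E, g e ≤ μ := hub ⟨g, hg, rfl⟩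
      rw [← hval] at h1
      linarith
    by_cases hfc : ∃ t, 2 ≤ t ∧ t ≤ k ∧ ({v 0, v t} : Finset W) ∈ Bad E f
    · obtain ⟨t, ht2, htk, hct⟩ := hfc
      obtain ⟨g, hg1, hg2, hg3⟩ := cycle_case hE2 side hside hf hv ht2 htk hct
      exact contr1 g hg1 hg2 hg3
    · -- reversed path
      have hvR : PathProp (Bad E f) k (fun i => v (k - i)) := by
        constructor
        · intro i hi j hj hij
          have := hv.1 (k-i) (by omega) (k-j) (by omega) hij
          omega
        · intro i hi
          dsimp only
          have h1 : k - (i+1) = k - i - 1 := by omega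
          have h2 : k - i = (k - i - 1) + 1 := by omega
          rw [h1, h2, Finset.pair_comm]
          exact hv.2 (k-i-1) (by omega)
      by_cases hbc : ∃ t, 2 ≤ t ∧ t ≤ k ∧ ({v (k-0), v (k-t)} : Finset W) ∈ Bad E f
      · obtain ⟨t, ht2, htk, hct⟩ := hbc
        obtain ⟨g, hg1, hg2, hg3⟩ := cycle_case hE2 side hside hf hvR ht2 htk hct
        exact contr1 g hg1 hg2 hg3
      · have hleaf0 := leaf_of_maximal (Bad_subset E f) hE2 hv hk1 hmax hfc
        have hleafkR := leaf_of_maximal (Bad_subset E f) hE2 hvR hk1 hmax (by exact hbc)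
        have hleafk : ∀ e ∈ Bad E f, v k ∈ e → e = ({v (k-1), v k} : Finset W) := by
          intro e he hvk
          have := hleafkR e he (by simpa using hvk)
          rw [this]
          simp [Finset.pair_comm]
        rcases path_case hE2 hf hv hk1 hleaf0 hleafk with ⟨g, hg1, hg2, hg3⟩ | ⟨g, hg1, hg2⟩
        · exact contr1 g hg1 hg2 hg3
        · exact contr2 g hg1 hg2
  -- all edge values are integers
  have hint : ∀ e ∈ E, ∃ z : ℤ, f e = (z:ℝ) := by
    intro e he
    by_contra hz
    have : e ∈ Bad E f := mem_Bad.mpr ⟨he, hz⟩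
    rw [hBadempty] at this
    exact absurd this (Finset.notMem_empty e)
  obtain ⟨z, hz⟩ := sum_int hint
  exact ⟨z, by rw [← hval, hz]⟩


section DoubleCover

variable {V : Type*} [Fintype V] [DecidableEq V]

/-- the bipartite double cover of the edge set -/
def DC (E' : Finset (Finset V)) : Finset (Finset (V × Bool)) :=
  univ.filter (fun s => s.card = 2 ∧ s.image Prod.fst ∈ E' ∧ s.image Prod.snd = univ)

lemma mem_DC {E' : Finset (Finset V)} (hE : ∀ e ∈ E', e.card = 2) {s : Finset (V × Bool)} :
    s ∈ DC E' ↔ ∃ a b : V, a ≠ b ∧ ({a,b} : Finset V) ∈ E' ∧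
      s = ({(a,false),(b,true)} : Finset (V × Bool)) := by
  constructor
  · intro hs
    obtain ⟨hcard, himg, hsnd⟩ := (Finset.mem_filter.mp hs).2
    obtain ⟨p, q, hpq, rfl⟩ := Finset.card_eq_two.mp hcard
    have hsnd2 : p.2 ≠ q.2 := by
      intro h
      have h2 := congrArg Finset.card hsnd
      rw [Finset.image_insert, Finset.image_singleton, h] at h2
      simp at h2
    have hfst : p.1 ≠ q.1 := by
      intro h
      have h2 := hE _ himg
      rw [Finset.image_insert, Finset.image_singleton] at h2
      rw [h] at h2
      simp at h2
    cases hp2 : p.2 with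
    | false =>
      have hq2 : q.2 = true := by
        cases hq2 : q.2 with
        | false => exact absurd (hp2.trans hq2.symm) hsnd2
        | true => rfl
      refine ⟨p.1, q.1, hfst, ?_, ?_⟩
      · have : ({p.1, q.1} : Finset V) = ({p, q} : Finset (V × Bool)).image Prod.fst := by
          rw [Finset.image_insert, Finset.image_singleton]
        rw [this]
        exact himg
      · have hp : p = (p.1, false) := Prod.ext rfl hp2
        have hq : q = (q.1, true) := Prod.ext rfl hq2
        rw [← hp, ← hq]
    | true =>
      have hq2 : q.2 = false := by
        cases hq2 : q.2 with
        | true => exact absurd (hp2.trans hq2.symm) hsnd2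
        | false => rfl
      refine ⟨q.1, p.1, hfst.symm, ?_, ?_⟩
      · have : ({q.1, p.1} : Finset V) = ({p, q} : Finset (V × Bool)).image Prod.fst := by
          rw [Finset.image_insert, Finset.image_singleton, Finset.pair_comm]
        rw [this]
        exact himg
      · have hp : p = (p.1, true) := Prod.ext rfl hp2
        have hq : q = (q.1, false) := Prod.ext rfl hq2
        rw [← hp, ← hq, Finset.pair_comm]
  · rintro ⟨a, b, hab, habE, rfl⟩
    refine Finset.mem_filter.mpr ⟨Finset.mem_univ _, ?_, ?_, ?_⟩
    · exact Finset.card_pair (by simp)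
    · rw [Finset.image_insert, Finset.image_singleton]
      exact habE
    · rw [Finset.image_insert, Finset.image_singleton]
      apply Finset.eq_univ_of_forall
      intro c
      cases c <;> simp

lemma DC_maps {E' : Finset (Finset V)} {s : Finset (V × Bool)} (hs : s ∈ DC E') :
    s.image Prod.fst ∈ E' := (Finset.mem_filter.mp hs).2.2.1

lemma DC_fiber {E' : Finset (Finset V)} (hE : ∀ e ∈ E', e.card = 2) {a b : V}
    (hab : a ≠ b) (habE : ({a,b} : Finset V) ∈ E') :
    (DC E').filter (fun s => s.image Prod.fst = ({a,b} : Finset V)) =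
      {({(a,false),(b,true)} : Finset (V × Bool)), ({(b,false),(a,true)} : Finset (V × Bool))} := by
  ext s
  rw [Finset.mem_filter]
  constructor
  · rintro ⟨hs, himg⟩
    obtain ⟨x, y, hxy, hxyE, rfl⟩ := (mem_DC hE).mp hs
    rw [Finset.image_insert, Finset.image_singleton] at himg
    dsimp only at himg
    have hx : x ∈ ({a, b} : Finset V) := by rw [← himg]; simp
    have hy : y ∈ ({a, b} : Finset V) := by rw [← himg]; simp
    rcases Finset.mem_insert.mp hx with rfl | hx'
    · have hyb : y = b := by
        rcases Finset.mem_insert.mp hy with h | h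
        · exact absurd h hxy.symm
        · exact Finset.mem_singleton.mp h
      subst hyb
      exact Finset.mem_insert.mpr (Or.inl rfl)
    · rw [Finset.mem_singleton] at hx'
      subst hx'
      have hya : y = a := by
        rcases Finset.mem_insert.mp hy with h | h
        · exact h
        · exact absurd (Finset.mem_singleton.mp h) hxy.symm
      subst hya
      exact Finset.mem_insert.mpr (Or.inr (Finset.mem_singleton.mpr rfl))
  · intro hmem
    rcases Finset.mem_insert.mp hmem with rfl | h
    · refine ⟨(mem_DC hE).mpr ⟨a, b, hab, habE, rfl⟩, ?_⟩
      rw [Finset.image_insert, Finset.image_singleton]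
    · rw [Finset.mem_singleton] at h
      subst h
      refine ⟨(mem_DC hE).mpr ⟨b, a, hab.symm, by rwa [Finset.pair_comm], rfl⟩, ?_⟩
      rw [Finset.image_insert, Finset.image_singleton]
      exact Finset.pair_comm _ _

lemma DC_lifts_ne {a b : V} (hab : a ≠ b) :
    ({(a,false),(b,true)} : Finset (V × Bool)) ≠ ({(b,false),(a,true)} : Finset (V × Bool)) := by
  intro h
  have : ((a,false) : V × Bool) ∈ ({(b,false),(a,true)} : Finset (V × Bool)) := by
    rw [← h]; simp
  simp [Prod.ext_iff] at this
  exact hab this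

end DoubleCover

end HalfInt


theorem fracMatchingNumber_halfIntegral {V : Type*} [Fintype V] [DecidableEq V]
    (E' : Finset (Finset V)) (hE : ∀ e ∈ E', e.card = 2) (ν : ℝ)
    (hν : IsGreatest {x : ℝ | ∃ f, FracMatching E' f ∧ ∑ e ∈ E', f e = x} ν) :
    ∃ m : ℤ, 2 * ν = (m : ℝ) := by
  classical
  have hE2'' : ∀ s ∈ HalfInt.DC E', s.card = 2 := fun s hs => (Finset.mem_filter.mp hs).2.1
  have hside : ∀ s ∈ HalfInt.DC E', ∀ p ∈ s, ∀ q ∈ s, p ≠ q → Prod.snd p ≠ Prod.snd q := by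
    intro s hs p hp q hq hpq
    obtain ⟨a, b, hab, habE, rfl⟩ := (HalfInt.mem_DC hE).mp hs
    rcases Finset.mem_insert.mp hp with rfl | hp' <;>
      rcases Finset.mem_insert.mp hq with h' | hq'
    · exact absurd h'.symm hpq
    · rw [Finset.mem_singleton] at hq'; subst hq'; simp
    · rw [Finset.mem_singleton] at hp'; subst hp'; rw [h']; simp
    · rw [Finset.mem_singleton] at hp' hq'; subst hp'; subst hq'; exact absurd rfl hpq
  have hfw : ∀ F : Finset (V × Bool) → ℝ,
      ∑ e ∈ E', ∑ s ∈ (HalfInt.DC E').filter (fun s => s.image Prod.fst = e), F s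
        = ∑ s ∈ HalfInt.DC E', F s :=
    fun F => Finset.sum_fiberwise_of_maps_to (fun s hs => HalfInt.DC_maps hs) F
  -- upward transfer
  have hup : ∀ f, FracMatching E' f →
      FracMatching (HalfInt.DC E')
        (fun s => if s ∈ HalfInt.DC E' then f (s.image Prod.fst) else 0)
      ∧ ∑ s ∈ HalfInt.DC E', (if s ∈ HalfInt.DC E' then f (s.image Prod.fst) else 0)
          = 2 * ∑ e ∈ E', f e := by
    intro f hf
    set f'' : Finset (V × Bool) → ℝ :=
      fun s => if s ∈ HalfInt.DC E' then f (s.image Prod.fst) else 0 with hf''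
    have hval1 : ∀ {a b : V}, a ≠ b → ({a,b} : Finset V) ∈ E' →
        f'' ({(a,false),(b,true)} : Finset (V × Bool)) = f {a, b} := by
      intro a b hab he
      rw [hf'']; dsimp only
      rw [if_pos ((HalfInt.mem_DC hE).mpr ⟨a, b, hab, he, rfl⟩),
        Finset.image_insert, Finset.image_singleton]
    have hval2 : ∀ {a b : V}, a ≠ b → ({a,b} : Finset V) ∈ E' →
        f'' ({(b,false),(a,true)} : Finset (V × Bool)) = f {a, b} := by
      intro a b hab he
      rw [hf'']; dsimp only
      rw [if_pos ((HalfInt.mem_DC hE).mpr ⟨b, a, hab.symm, by rwa [Finset.pair_comm], rfl⟩),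
        Finset.image_insert, Finset.image_singleton]
      dsimp only
      rw [Finset.pair_comm]
    have hfibsum : ∀ e ∈ E',
        ∑ s ∈ (HalfInt.DC E').filter (fun s => s.image Prod.fst = e), f'' s = 2 * f e := by
      intro e he
      obtain ⟨a, b, hab, rfl⟩ := Finset.card_eq_two.mp (hE e he)
      rw [HalfInt.DC_fiber hE hab he, Finset.sum_pair (HalfInt.DC_lifts_ne hab),
        hval1 hab he, hval2 hab he]
      ring
    refine ⟨⟨?_, ?_, ?_⟩, ?_⟩
    · intro s; rw [hf'']; dsimp only; split_ifs with h
      · exact hf.1 _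
      · exact le_refl 0
    · intro s hs; rw [hf'']; dsimp only; rw [if_neg hs]
    · rintro ⟨u, b0⟩
      show ∑ s ∈ HalfInt.DC E', (if (u, b0) ∈ s then f'' s else 0) ≤ 1
      rw [← hfw (fun s => if (u, b0) ∈ s then f'' s else 0)]
      have hper : ∀ e ∈ E',
          ∑ s ∈ (HalfInt.DC E').filter (fun s => s.image Prod.fst = e),
            (if (u, b0) ∈ s then f'' s else 0) = (if u ∈ e then f e else 0) := by
        intro e he
        obtain ⟨a, b, hab, rfl⟩ := Finset.card_eq_two.mp (hE e he)
        rw [HalfInt.DC_fiber hE hab he, Finset.sum_pair (HalfInt.DC_lifts_ne hab),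
          hval1 hab he, hval2 hab he]
        by_cases hua : u = a
        · subst hua
          by_cases hub : u = b
          · exact absurd hub hab
          · cases b0 <;> simp [Prod.ext_iff, hab, hub]
        · by_cases hub : u = b
          · subst hub
            cases b0 <;> simp [Prod.ext_iff, hua, Ne.symm hab]
          · cases b0 <;> simp [Prod.ext_iff, hua, hub]
      rw [Finset.sum_congr rfl hper]
      exact hf.2.2 u
    · rw [← hfw f'', Finset.sum_congr rfl hfibsum, ← Finset.mul_sum]
  -- downward transfer
  have hdown : ∀ f', FracMatching (HalfInt.DC E') f' →
      ∃ g, FracMatching E' g ∧ ∑ s ∈ HalfInt.DC E', f' s = 2 * ∑ e ∈ E', g e := by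
    intro f' hf'
    set g : Finset V → ℝ :=
      fun e => (∑ s ∈ (HalfInt.DC E').filter (fun s => s.image Prod.fst = e), f' s)/2 with hg
    have hfib2g : ∀ e, ∑ s ∈ (HalfInt.DC E').filter (fun s => s.image Prod.fst = e), f' s
        = 2 * g e := by
      intro e
      rw [hg]; dsimp only; ring
    have hkey : ∀ e ∈ E', ∀ u : V, (if u ∈ e then (2:ℝ) * g e else 0)
        = (∑ s ∈ (HalfInt.DC E').filter (fun s => s.image Prod.fst = e),
            if (u, false) ∈ s then f' s else 0)
          + (∑ s ∈ (HalfInt.DC E').filter (fun s => s.image Prod.fst = e),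
            if (u, true) ∈ s then f' s else 0) := by
      intro e he u
      obtain ⟨a, b, hab, rfl⟩ := Finset.card_eq_two.mp (hE e he)
      rw [← hfib2g, HalfInt.DC_fiber hE hab he, Finset.sum_pair (HalfInt.DC_lifts_ne hab),
        Finset.sum_pair (HalfInt.DC_lifts_ne hab), Finset.sum_pair (HalfInt.DC_lifts_ne hab)]
      by_cases hua : u = a
      · subst hua
        by_cases hub : u = b
        · exact absurd hub hab
        · simp [Prod.ext_iff, hab, hub]
      · by_cases hub : u = b
        · subst hub
          simp [Prod.ext_iff, hua, Ne.symm hab]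
          ring
        · simp [Prod.ext_iff, hua, hub]
    refine ⟨g, ⟨?_, ?_, ?_⟩, ?_⟩
    · intro e
      rw [hg]; dsimp only
      have : (0:ℝ) ≤ ∑ s ∈ (HalfInt.DC E').filter (fun s => s.image Prod.fst = e), f' s :=
        Finset.sum_nonneg (fun s _ => hf'.1 s)
      linarith
    · intro e he
      rw [hg]; dsimp only
      have hempty : (HalfInt.DC E').filter (fun s => s.image Prod.fst = e) = ∅ := by
        apply Finset.filter_false_of_mem
        intro s hs him
        exact he (by rw [← him]; exact HalfInt.DC_maps hs)
      rw [hempty]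
      simp
    · intro u
      have h2 : ∑ e ∈ E', (if u ∈ e then (2:ℝ) * g e else 0) ≤ 2 := by
        rw [Finset.sum_congr rfl (fun e he => hkey e he u), Finset.sum_add_distrib,
          hfw (fun s => if (u, false) ∈ s then f' s else 0),
          hfw (fun s => if (u, true) ∈ s then f' s else 0)]
        have hb1 := hf'.2.2 (u, false)
        have hb2 := hf'.2.2 (u, true)
        linarith
      have h3 : ∑ e ∈ E', (if u ∈ e then (2:ℝ) * g e else 0)
          = 2 * ∑ e ∈ E', (if u ∈ e then g e else 0) := by
        rw [Finset.mul_sum]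
        apply Finset.sum_congr rfl
        intro e _
        by_cases h : u ∈ e <;> simp [h]
      rw [h3] at h2
      linarith
    · rw [← hfw f', Finset.sum_congr rfl (fun e (_ : e ∈ E') => hfib2g e), ← Finset.mul_sum]
  -- transfer IsGreatest to the double cover
  have hgr : IsGreatest {x : ℝ | ∃ f, FracMatching (HalfInt.DC E') f ∧
      ∑ s ∈ HalfInt.DC E', f s = x} (2*ν) := by
    constructor
    · obtain ⟨f, hf, hsum⟩ := hν.1
      obtain ⟨hfm, hval⟩ := hup f hf
      exact ⟨_, hfm, by rw [hval, hsum]⟩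
    · rintro x ⟨f', hf', rfl⟩
      obtain ⟨g, hg, hval⟩ := hdown f' hf'
      have := hν.2 ⟨g, hg, rfl⟩
      rw [hval]
      linarith
  obtain ⟨z, hz⟩ := HalfInt.bipartite_integral (HalfInt.DC E') hE2'' Prod.snd hside (2*ν) hgr
  exact ⟨z, hz⟩
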